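/- Let f : [a,b] → ℝ be convex and continuously differentiable, and suppose a < a' < b' < b with a + b = a' + b'. Then (1/(b-a))∫_a^b f(x) dx ≥ (1/(b'-a'))∫_{a'}^{b'} f(x) dx ≥ f((a+b)/2). If f is strictly convex, the inequalities are strict. -/

import Mathlib

open Set intervalIntegral

lemma pair_le_aux {f : ℝ → ℝ} {a b : ℝ} (hconv : ConvexOn ℝ (Set.Icc a b) f)
    {x1 x2 y : ℝ} (hx1 : x1 ∈ Set.Icc a b) (hx2 : x2 ∈ Set.Icc a b)
    (hle : x1 ≤ x2) (hy1 : x1 ≤ y) (hy2 : y ≤ x2) :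
    f y + f (x1 + x2 - y) ≤ f x1 + f x2 := by
  rcases eq_or_lt_of_le hle with h | h
  · have hyx : y = x1 := le_antisymm (by rw [h]; exact hy2) hy1
    rw [hyx, show x1 + x2 - x1 = x2 from by ring]
  · have hx : x2 - x1 > 0 := by linarith
    have hl0 : 0 ≤ (x2 - y) / (x2 - x1) := div_nonneg (by linarith) hx.le
    have hm0 : 0 ≤ (y - x1) / (x2 - x1) := div_nonneg (by linarith) hx.le
    have hs : (x2 - y) / (x2 - x1) + (y - x1) / (x2 - x1) = 1 := by field_simp; ring
    have i1 := hconv.2 hx1 hx2 hl0 hm0 hs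
    have i2 := hconv.2 hx1 hx2 hm0 hl0 (by linarith)
    rw [show ((x2 - y) / (x2 - x1)) • x1 + ((y - x1) / (x2 - x1)) • x2 = y from by
      rw [smul_eq_mul, smul_eq_mul]; field_simp; ring] at i1
    rw [show ((y - x1) / (x2 - x1)) • x1 + ((x2 - y) / (x2 - x1)) • x2 = x1 + x2 - y from by
      rw [smul_eq_mul, smul_eq_mul]; field_simp; ring] at i2
    simp only [smul_eq_mul] at i1 i2
    have key : (x2 - y) / (x2 - x1) * f x1 + (y - x1) / (x2 - x1) * f x2 +
        ((y - x1) / (x2 - x1) * f x1 + (x2 - y) / (x2 - x1) * f x2) = f x1 + f x2 := by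
      field_simp; ring
    linarith

lemma pair_le {f : ℝ → ℝ} {a b : ℝ} (hconv : ConvexOn ℝ (Set.Icc a b) f)
    {x1 x2 y : ℝ} (hx1 : x1 ∈ Set.Icc a b) (hx2 : x2 ∈ Set.Icc a b)
    (hy1 : min x1 x2 ≤ y) (hy2 : y ≤ max x1 x2) :
    f y + f (x1 + x2 - y) ≤ f x1 + f x2 := by
  rcases le_total x1 x2 with h | h
  · rw [min_eq_left h] at hy1; rw [max_eq_right h] at hy2
    exact pair_le_aux hconv hx1 hx2 h hy1 hy2
  · rw [min_eq_right h] at hy1; rw [max_eq_left h] at hy2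
    have := pair_le_aux hconv hx2 hx1 h hy1 hy2
    rw [show x2 + x1 - y = x1 + x2 - y by ring] at this; linarith

lemma pair_lt {f : ℝ → ℝ} {a b : ℝ} (hconv : StrictConvexOn ℝ (Set.Icc a b) f)
    {x1 x2 y : ℝ} (hx1 : x1 ∈ Set.Icc a b) (hx2 : x2 ∈ Set.Icc a b)
    (hle : x1 < x2) (hy1 : x1 < y) (hy2 : y < x2) :
    f y + f (x1 + x2 - y) < f x1 + f x2 := by
  have hx : x2 - x1 > 0 := by linarith
  have hl0 : 0 < (x2 - y) / (x2 - x1) := div_pos (by linarith) hx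
  have hm0 : 0 < (y - x1) / (x2 - x1) := div_pos (by linarith) hx
  have hs : (x2 - y) / (x2 - x1) + (y - x1) / (x2 - x1) = 1 := by field_simp; ring
  have i1 := hconv.2 hx1 hx2 (ne_of_lt hle) hl0 hm0 hs
  have i2 := hconv.2 hx1 hx2 (ne_of_lt hle) hm0 hl0 (by linarith)
  rw [show ((x2 - y) / (x2 - x1)) • x1 + ((y - x1) / (x2 - x1)) • x2 = y from by
    rw [smul_eq_mul, smul_eq_mul]; field_simp; ring] at i1
  rw [show ((y - x1) / (x2 - x1)) • x1 + ((x2 - y) / (x2 - x1)) • x2 = x1 + x2 - y from by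
    rw [smul_eq_mul, smul_eq_mul]; field_simp; ring] at i2
  simp only [smul_eq_mul] at i1 i2
  have key : (x2 - y) / (x2 - x1) * f x1 + (y - x1) / (x2 - x1) * f x2 +
      ((y - x1) / (x2 - x1) * f x1 + (x2 - y) / (x2 - x1) * f x2) = f x1 + f x2 := by
    field_simp; ring
  linarith

lemma avg_eq (f : ℝ → ℝ) {a b : ℝ} (hab : a < b) (hcf : ContinuousOn f (Set.Icc a b)) :
    (1/(b-a)) * ∫ x in a..b, f x
      = ∫ t in (0:ℝ)..1, (f ((b-a)*t + a) + f (-(b-a)*t + b))/2 := by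
  have hne : b - a ≠ 0 := by intro h; linarith [sub_eq_zero.mp h]
  have c1 : ContinuousOn (fun t => f ((b-a)*t + a)) (Set.Icc (0:ℝ) 1) := by
    apply hcf.comp (Continuous.continuousOn (by continuity))
    intro t ht
    simp only [Set.mem_Icc] at ht ⊢
    constructor <;> nlinarith [ht.1, ht.2]
  have c2 : ContinuousOn (fun t => f (-(b-a)*t + b)) (Set.Icc (0:ℝ) 1) := by
    apply hcf.comp (Continuous.continuousOn (by continuity))
    intro t ht
    simp only [Set.mem_Icc] at ht ⊢
    constructor <;> nlinarith [ht.1, ht.2]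
  have int1 : IntervalIntegrable (fun t => f ((b-a)*t + a)) MeasureTheory.volume 0 1 :=
    c1.intervalIntegrable_of_Icc (by norm_num)
  have int2 : IntervalIntegrable (fun t => f (-(b-a)*t + b)) MeasureTheory.volume 0 1 :=
    c2.intervalIntegrable_of_Icc (by norm_num)
  have e1 : ∫ t in (0:ℝ)..1, f ((b-a)*t + a) = (b-a)⁻¹ • ∫ x in a..b, f x := by
    rw [intervalIntegral.integral_comp_mul_add f hne a,
      show (b-a)*0 + a = a by ring, show (b-a)*1 + a = b by ring]
  have e2 : ∫ t in (0:ℝ)..1, f (-(b-a)*t + b) = (b-a)⁻¹ • ∫ x in a..b, f x := by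
    rw [intervalIntegral.integral_comp_mul_add f (neg_ne_zero.2 hne) b,
      show -(b-a)*0 + b = b by ring, show -(b-a)*1 + b = a by ring,
      intervalIntegral.integral_symm, inv_neg, neg_smul_neg]
  have esplit : ∫ t in (0:ℝ)..1, (f ((b-a)*t + a) + f (-(b-a)*t + b))/2
      = ((∫ t in (0:ℝ)..1, f ((b-a)*t + a)) + ∫ t in (0:ℝ)..1, f (-(b-a)*t + b))/2 := by
    rw [intervalIntegral.integral_div, intervalIntegral.integral_add int1 int2]
  rw [esplit, e1, e2, smul_eq_mul]
  field_simp
  ring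

lemma affmem1 {a b c d t : ℝ} (h1 : a ≤ c) (h2 : d ≤ b) (hcd : c ≤ d)
    (ht0 : 0 ≤ t) (ht1 : t ≤ 1) : (d-c)*t + c ∈ Set.Icc a b :=
  ⟨by nlinarith, by nlinarith⟩

lemma affmem2 {a b c d t : ℝ} (h1 : a ≤ c) (h2 : d ≤ b) (hcd : c ≤ d)
    (ht0 : 0 ≤ t) (ht1 : t ≤ 1) : -(d-c)*t + d ∈ Set.Icc a b :=
  ⟨by nlinarith, by nlinarith⟩

theorem jensen_nested (f : ℝ → ℝ) (a b a' b' : ℝ)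
    (h1 : a < a') (h2 : a' < b') (h3 : b' < b) (hmid : a + b = a' + b')
    (hconv : ConvexOn ℝ (Set.Icc a b) f) (hdiff : ContDiffOn ℝ 1 f (Set.Icc a b)) :
    ((1 / (b - a)) * ∫ x in a..b, f x ≥ (1 / (b' - a')) * ∫ x in a'..b', f x ∧
      (1 / (b' - a')) * ∫ x in a'..b', f x ≥ f ((a + b) / 2)) ∧
    (StrictConvexOn ℝ (Set.Icc a b) f →
      (1 / (b - a)) * ∫ x in a..b, f x > (1 / (b' - a')) * ∫ x in a'..b', f x ∧
      (1 / (b' - a')) * ∫ x in a'..b', f x > f ((a + b) / 2)) := by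
  have hab : a < b := by linarith
  have hab' : a' < b' := h2
  have hsub : Set.Icc a' b' ⊆ Set.Icc a b := Set.Icc_subset_Icc h1.le h3.le
  have hcf : ContinuousOn f (Set.Icc a b) := hdiff.continuousOn
  have hcf' : ContinuousOn f (Set.Icc a' b') := hcf.mono hsub
  have EA := avg_eq f hab hcf
  have EB := avg_eq f hab' hcf'
  -- continuity of the two integrands on [0,1]
  have cG : ContinuousOn (fun t => (f ((b-a)*t + a) + f (-(b-a)*t + b))/2) (Set.Icc (0:ℝ) 1) := by
    apply ContinuousOn.div_const
    apply ContinuousOn.add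
    · exact hcf.comp (Continuous.continuousOn (by continuity))
        (fun t ht => affmem1 le_rfl le_rfl hab.le ht.1 ht.2)
    · exact hcf.comp (Continuous.continuousOn (by continuity))
        (fun t ht => affmem2 le_rfl le_rfl hab.le ht.1 ht.2)
  have cG' : ContinuousOn (fun t => (f ((b'-a')*t + a') + f (-(b'-a')*t + b'))/2) (Set.Icc (0:ℝ) 1) := by
    apply ContinuousOn.div_const
    apply ContinuousOn.add
    · exact hcf'.comp (Continuous.continuousOn (by continuity))
        (fun t ht => affmem1 le_rfl le_rfl hab'.le ht.1 ht.2)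
    · exact hcf'.comp (Continuous.continuousOn (by continuity))
        (fun t ht => affmem2 le_rfl le_rfl hab'.le ht.1 ht.2)
  have intG : IntervalIntegrable (fun t => (f ((b-a)*t + a) + f (-(b-a)*t + b))/2)
      MeasureTheory.volume 0 1 := cG.intervalIntegrable_of_Icc (by norm_num)
  have intG' : IntervalIntegrable (fun t => (f ((b'-a')*t + a') + f (-(b'-a')*t + b'))/2)
      MeasureTheory.volume 0 1 := cG'.intervalIntegrable_of_Icc (by norm_num)
  -- memberships
  have memx1 : ∀ t ∈ Set.Icc (0:ℝ) 1, (b-a)*t + a ∈ Set.Icc a b :=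
    fun t ht => affmem1 le_rfl le_rfl hab.le ht.1 ht.2
  have memx2 : ∀ t ∈ Set.Icc (0:ℝ) 1, -(b-a)*t + b ∈ Set.Icc a b :=
    fun t ht => affmem2 le_rfl le_rfl hab.le ht.1 ht.2
  have memy1 : ∀ t ∈ Set.Icc (0:ℝ) 1, (b'-a')*t + a' ∈ Set.Icc a b :=
    fun t ht => affmem1 h1.le h3.le hab'.le ht.1 ht.2
  have memy2 : ∀ t ∈ Set.Icc (0:ℝ) 1, -(b'-a')*t + b' ∈ Set.Icc a b :=
    fun t ht => affmem2 h1.le h3.le hab'.le ht.1 ht.2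
  -- pointwise inequality 1
  have hpt1 : ∀ t ∈ Set.Icc (0:ℝ) 1,
      (f ((b'-a')*t + a') + f (-(b'-a')*t + b'))/2 ≤ (f ((b-a)*t + a) + f (-(b-a)*t + b))/2 := by
    intro t ht
    have ht0 := ht.1; have ht1 := ht.2
    have hmin : min ((b-a)*t + a) (-(b-a)*t + b) ≤ (b'-a')*t + a' := by
      rcases le_total t (1/2) with h | h
      · have hp : (0:ℝ) ≤ (a'-a)*(1-2*t) := mul_nonneg (by linarith) (by linarith)
        exact min_le_of_left_le (by nlinarith [hp])
      · have hp : (0:ℝ) ≤ (b-a')*(2*t-1) := mul_nonneg (by linarith) (by linarith)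
        exact min_le_of_right_le (by nlinarith [hp])
    have hmax : (b'-a')*t + a' ≤ max ((b-a)*t + a) (-(b-a)*t + b) := by
      rcases le_total t (1/2) with h | h
      · have hp : (0:ℝ) ≤ (b-a')*(1-2*t) := mul_nonneg (by linarith) (by linarith)
        exact le_max_of_le_right (by nlinarith [hp])
      · have hp : (0:ℝ) ≤ (a'-a)*(2*t-1) := mul_nonneg (by linarith) (by linarith)
        exact le_max_of_le_left (by nlinarith [hp])
    have key := pair_le hconv (memx1 t ht) (memx2 t ht) hmin hmax
    rw [show ((b-a)*t + a) + (-(b-a)*t + b) - ((b'-a')*t + a') = -(b'-a')*t + b' by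
      linarith] at key
    linarith
  -- pointwise inequality 2 (Jensen)
  have hpt2 : ∀ t ∈ Set.Icc (0:ℝ) 1,
      f ((a+b)/2) ≤ (f ((b'-a')*t + a') + f (-(b'-a')*t + b'))/2 := by
    intro t ht
    have hsum : ((b'-a')*t + a') + (-(b'-a')*t + b') = a + b := by linarith
    have hmin : min ((b'-a')*t + a') (-(b'-a')*t + b') ≤ (a+b)/2 := by
      rcases le_total ((b'-a')*t + a') (-(b'-a')*t + b') with h | h
      · exact min_le_of_left_le (by linarith)
      · exact min_le_of_right_le (by linarith)
    have hmax : (a+b)/2 ≤ max ((b'-a')*t + a') (-(b'-a')*t + b') := by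
      rcases le_total ((b'-a')*t + a') (-(b'-a')*t + b') with h | h
      · exact le_max_of_le_right (by linarith)
      · exact le_max_of_le_left (by linarith)
    have key := pair_le hconv (memy1 t ht) (memy2 t ht) hmin hmax
    rw [show ((b'-a')*t + a') + (-(b'-a')*t + b') - (a+b)/2 = (a+b)/2 by
      linarith] at key
    linarith
  have intconst : IntervalIntegrable (fun _ : ℝ => f ((a+b)/2)) MeasureTheory.volume 0 1 :=
    intervalIntegrable_const
  have econst : ∫ _ in (0:ℝ)..1, f ((a+b)/2) = f ((a+b)/2) := by simp
  refine ⟨⟨?_, ?_⟩, ?_⟩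
  · rw [ge_iff_le, EA, EB]
    exact intervalIntegral.integral_mono_on (by norm_num) intG' intG hpt1
  · rw [ge_iff_le, EB, ← econst]
    exact intervalIntegral.integral_mono_on (by norm_num) intconst intG' hpt2
  · intro hsc
    constructor
    · rw [gt_iff_lt, EA, EB]
      apply intervalIntegral.integral_lt_integral_of_continuousOn_of_le_of_exists_lt
        (by norm_num) cG' cG (fun t ht => hpt1 t ⟨ht.1.le, ht.2⟩)
      refine ⟨0, by norm_num, ?_⟩
      simp only [mul_zero, zero_add]
      have key := pair_lt hsc (Set.left_mem_Icc.2 hab.le) (Set.right_mem_Icc.2 hab.le)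
        hab h1 (by linarith : a' < b)
      rw [show a + b - a' = b' by linarith] at key
      linarith
    · rw [gt_iff_lt, EB, ← econst]
      apply intervalIntegral.integral_lt_integral_of_continuousOn_of_le_of_exists_lt
        (by norm_num) continuousOn_const cG' (fun t ht => hpt2 t ⟨ht.1.le, ht.2⟩)
      refine ⟨0, by norm_num, ?_⟩
      simp only [mul_zero, zero_add]
      have ha'm : a' < (a+b)/2 := by linarith
      have hmb' : (a+b)/2 < b' := by linarith
      have key := pair_lt hsc (hsub (Set.left_mem_Icc.2 hab'.le))
        (hsub (Set.right_mem_Icc.2 hab'.le)) hab' ha'm hmb'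
      rw [show a' + b' - (a+b)/2 = (a+b)/2 by linarith] at key
      linarith
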